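/- Let S, β, c be positive real numbers. The function f(A, B) = S·β / (B · log₂(1 + c·2^{−A})) is convex on the convex set {(A, B) ∈ ℝ² : B > 0}, where log₂ denotes the base-2 logarithm. (Note that 1 + c·2^{−A} > 1 for every real A, so the denominator is positive on this set.) -/

import Mathlib

open Real

noncomputable def uu (c s A : ℝ) : ℝ := Real.log (1 + c * Real.exp (s * A))

noncomputable def phi (c s A : ℝ) : ℝ := uu c s A ^ (-(1/2) : ℝ)

noncomputable def phi' (c s A : ℝ) : ℝ :=
  c * Real.exp (s * A) * s / (1 + c * Real.exp (s * A)) * (-(1/2)) * uu c s A ^ (-(3/2) : ℝ)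

lemma exp_aux (c s A : ℝ) : HasDerivAt (fun A : ℝ => 1 + c * Real.exp (s * A))
    (c * (Real.exp (s * A) * s)) A := by
  have h1 : HasDerivAt (fun A : ℝ => s * A) s A := by
    simpa using (hasDerivAt_id A).const_mul s
  exact ((h1.exp).const_mul c).const_add 1

lemma uu_pos {c : ℝ} (hc : 0 < c) (s A : ℝ) : 0 < uu c s A := by
  have := Real.exp_pos (s * A)
  have h1 : (1:ℝ) < 1 + c * Real.exp (s * A) := by nlinarith
  exact Real.log_pos h1

lemma hasDerivAt_uu {c : ℝ} (hc : 0 < c) (s A : ℝ) :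
    HasDerivAt (uu c s) (c * (Real.exp (s * A) * s) / (1 + c * Real.exp (s * A))) A := by
  have hd : (0:ℝ) < 1 + c * Real.exp (s * A) := by
    have := Real.exp_pos (s * A); nlinarith
  exact (exp_aux c s A).log hd.ne'

lemma hasDerivAt_phi {c : ℝ} (hc : 0 < c) (s A : ℝ) :
    HasDerivAt (phi c s) (phi' c s A) A := by
  have hU := uu_pos hc s A
  have h := (hasDerivAt_uu hc s A).rpow_const (p := (-(1/2) : ℝ)) (Or.inl hU.ne')
  have hexp : (-(1/2) : ℝ) - 1 = -(3/2) := by norm_num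
  rw [hexp] at h
  convert h using 1
  · rfl
  unfold phi' uu
  ring

lemma hasDerivAt_phi' {c : ℝ} (hc : 0 < c) (s A : ℝ) :
    HasDerivAt (phi' c s)
      ((3/4) * uu c s A ^ (-(5/2) : ℝ) * (c * Real.exp (s * A) * s / (1 + c * Real.exp (s * A)))^2
        - (1/2) * uu c s A ^ (-(3/2) : ℝ)
          * (c * s^2 * Real.exp (s * A) / (1 + c * Real.exp (s * A))^2)) A := by
  have hU := uu_pos hc s A
  have hd : (0:ℝ) < 1 + c * Real.exp (s * A) := by
    have := Real.exp_pos (s * A); nlinarith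
  -- derivative of v := c * exp (s*A) * s / (1 + c * exp (s*A))
  have hnum : HasDerivAt (fun A : ℝ => c * Real.exp (s * A) * s)
      (c * (Real.exp (s * A) * s) * s) A := by
    have h1 : HasDerivAt (fun A : ℝ => s * A) s A := by
      simpa using (hasDerivAt_id A).const_mul s
    have := (h1.exp).const_mul c
    simpa [mul_assoc, mul_comm, mul_left_comm] using this.mul_const s
  have hv : HasDerivAt (fun A : ℝ => c * Real.exp (s * A) * s / (1 + c * Real.exp (s * A)))
      ((c * (Real.exp (s * A) * s) * s * (1 + c * Real.exp (s * A))
        - c * Real.exp (s * A) * s * (c * (Real.exp (s * A) * s)))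
        / (1 + c * Real.exp (s * A))^2) A :=
    hnum.div (exp_aux c s A) hd.ne'
  have hr : HasDerivAt (fun A : ℝ => uu c s A ^ (-(3/2) : ℝ))
      (c * (Real.exp (s * A) * s) / (1 + c * Real.exp (s * A)) * (-(3/2))
        * uu c s A ^ (-(5/2) : ℝ)) A := by
    have h := (hasDerivAt_uu hc s A).rpow_const (p := (-(3/2) : ℝ)) (Or.inl hU.ne')
    have hexp : (-(3/2) : ℝ) - 1 = -(5/2) := by norm_num
    rwa [hexp] at h
  have hmul := (hv.mul_const (-(1/2) : ℝ)).mul hr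
  have heq : phi' c s = fun A =>
      (c * Real.exp (s * A) * s / (1 + c * Real.exp (s * A)) * (-(1/2)))
        * uu c s A ^ (-(3/2) : ℝ) := by
    funext A; unfold phi'; ring
  rw [heq]
  refine hmul.congr_deriv ?_
  have hU32 : uu c s A ^ (-(3/2) : ℝ) = uu c s A ^ (-(5/2) : ℝ) * uu c s A := by
    rw [show (-(3/2) : ℝ) = -(5/2) + 1 by norm_num, Real.rpow_add_one hU.ne']
  rw [hU32]
  field_simp
  ring

lemma phi''_nonneg {c : ℝ} (hc : 0 < c) (s A : ℝ) :
    0 ≤ (3/4) * uu c s A ^ (-(5/2) : ℝ)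
          * (c * Real.exp (s * A) * s / (1 + c * Real.exp (s * A)))^2
        - (1/2) * uu c s A ^ (-(3/2) : ℝ)
          * (c * s^2 * Real.exp (s * A) / (1 + c * Real.exp (s * A))^2) := by
  have hU := uu_pos hc s A
  have hE := Real.exp_pos (s * A)
  have hd : (0:ℝ) < 1 + c * Real.exp (s * A) := by nlinarith
  have hU32 : uu c s A ^ (-(3/2) : ℝ) = uu c s A ^ (-(5/2) : ℝ) * uu c s A := by
    rw [show (-(3/2) : ℝ) = -(5/2) + 1 by norm_num, Real.rpow_add_one hU.ne']
  have hU5 : (0:ℝ) < uu c s A ^ (-(5/2) : ℝ) := Real.rpow_pos_of_pos hU _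
  have hlog : uu c s A ≤ c * Real.exp (s * A) := by
    have := Real.log_le_sub_one_of_pos hd
    unfold uu; linarith
  rw [hU32]
  have hgoal : (3/4) * uu c s A ^ (-(5/2) : ℝ)
          * (c * Real.exp (s * A) * s / (1 + c * Real.exp (s * A)))^2
        - (1/2) * (uu c s A ^ (-(5/2) : ℝ) * uu c s A)
          * (c * s^2 * Real.exp (s * A) / (1 + c * Real.exp (s * A))^2)
      = uu c s A ^ (-(5/2) : ℝ)
          * ((3/4) * (c * Real.exp (s * A) * s)^2
            - (1/2) * uu c s A * (c * s^2 * Real.exp (s * A)))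
          / (1 + c * Real.exp (s * A))^2 := by
    field_simp
  rw [hgoal]
  apply div_nonneg _ (by positivity)
  apply mul_nonneg hU5.le
  nlinarith [mul_nonneg (mul_nonneg (mul_nonneg hc.le (sq_nonneg s)) hE.le)
    (sub_nonneg.2 hlog)]

lemma convexOn_phi {c : ℝ} (hc : 0 < c) (s : ℝ) :
    ConvexOn ℝ Set.univ (phi c s) := by
  have hdiff : Differentiable ℝ (phi c s) :=
    fun A => (hasDerivAt_phi hc s A).differentiableAt
  have hderiv : deriv (phi c s) = phi' c s := funext fun A => (hasDerivAt_phi hc s A).deriv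
  apply convexOn_of_deriv2_nonneg convex_univ
  · exact hdiff.continuous.continuousOn
  · exact hdiff.differentiableOn
  · rw [hderiv]
    exact fun A _ => (hasDerivAt_phi' hc s A).differentiableAt.differentiableWithinAt
  · intro A _
    have h2 : deriv^[2] (phi c s) A = deriv (deriv (phi c s)) A := rfl
    rw [h2, hderiv, (hasDerivAt_phi' hc s A).deriv]
    exact phi''_nonneg hc s A

lemma qol (C x₀ x₁ x₂ y₁ y₂ a b : ℝ) (hC : 0 ≤ C) (hx₀ : 0 ≤ x₀)
    (hy₁ : 0 < y₁) (hy₂ : 0 < y₂) (ha : 0 ≤ a) (hb : 0 ≤ b) (hab : a + b = 1)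
    (hx : x₀ ≤ a * x₁ + b * x₂) :
    C * x₀^2 / (a * y₁ + b * y₂) ≤ a * (C * x₁^2 / y₁) + b * (C * x₂^2 / y₂) := by
  have hy0 : 0 < a * y₁ + b * y₂ := by
    rcases eq_or_lt_of_le ha with h | h
    · have hb1 : b = 1 := by linarith
      rw [← h, hb1]; simpa using hy₂
    · nlinarith [mul_nonneg hb hy₂.le]
  have hRHS : a * (C * x₁^2 / y₁) + b * (C * x₂^2 / y₂)
      = (a * (C * x₁^2) * y₂ + b * (C * x₂^2) * y₁) / (y₁ * y₂) := by
    field_simp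
    try ring
  rw [hRHS, div_le_div_iff₀ hy0 (mul_pos hy₁ hy₂)]
  have h1 : x₀^2 ≤ (a * x₁ + b * x₂)^2 := by nlinarith
  nlinarith [mul_nonneg (mul_nonneg (mul_nonneg hC ha) hb) (sq_nonneg (x₁ * y₂ - x₂ * y₁)),
    mul_le_mul_of_nonneg_right (mul_le_mul_of_nonneg_left h1 hC) (mul_pos hy₁ hy₂).le]

lemma f_eq {c : ℝ} (hc : 0 < c) (S β A B : ℝ) (hB : 0 < B) :
    S * β / (B * Real.logb 2 (1 + c * (2 : ℝ) ^ (-A)))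
      = (S * β * Real.log 2) * (phi c (-Real.log 2) A)^2 / B := by
  have h2A : (2 : ℝ) ^ (-A) = Real.exp (-Real.log 2 * A) := by
    rw [Real.rpow_def_of_pos (by norm_num : (0:ℝ) < 2)]; ring_nf
  have hU : 0 < uu c (-Real.log 2) A := uu_pos hc _ A
  have hphi2 : (phi c (-Real.log 2) A)^2 = (uu c (-Real.log 2) A)⁻¹ := by
    unfold phi
    rw [← Real.rpow_natCast (uu c (-Real.log 2) A ^ (-(1/2) : ℝ)) 2,
      ← Real.rpow_mul hU.le]
    norm_num
    exact Real.rpow_neg_one _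
  have hlogb : Real.logb 2 (1 + c * (2 : ℝ) ^ (-A))
      = uu c (-Real.log 2) A / Real.log 2 := by
    rw [Real.logb, h2A]; rfl
  have hlog2 : (0:ℝ) < Real.log 2 := Real.log_pos (by norm_num)
  rw [hlogb, hphi2]
  field_simp [hU.ne', hB.ne', hlog2.ne']

/-- Lemma 2 (first half): the function `f(A, B) = S·β / (B · log₂(1 + c·2^(−A)))`
is convex on `{(A, B) : B > 0}`. -/
theorem stmt_2 (S β c : ℝ) (hS : 0 < S) (hβ : 0 < β) (hc : 0 < c) :
    ConvexOn ℝ {p : ℝ × ℝ | 0 < p.2}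
      (fun p : ℝ × ℝ => S * β / (p.2 * Real.logb 2 (1 + c * (2 : ℝ) ^ (-p.1)))) := by
  constructor
  · exact convex_halfSpace_gt ⟨fun x y => rfl, fun r x => rfl⟩ 0
  · intro p hp q hq a b ha hb hab
    simp only [Set.mem_setOf_eq] at hp hq
    have hsnd : (a • p + b • q).2 = a * p.2 + b * q.2 := by
      simp [Prod.smul_snd, smul_eq_mul]
    have hfst : (a • p + b • q).1 = a * p.1 + b * q.1 := by
      simp [Prod.smul_fst, smul_eq_mul]
    have hB0 : 0 < a * p.2 + b * q.2 := by
      rcases eq_or_lt_of_le ha with h | h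
      · have hb1 : b = 1 := by linarith
        rw [← h, hb1]; simpa using hq
      · nlinarith [mul_nonneg hb hq.le]
    have hφ := (convexOn_phi hc (-Real.log 2)).2 (Set.mem_univ p.1) (Set.mem_univ q.1) ha hb hab
    simp only [smul_eq_mul] at hφ
    have hlog2 : (0:ℝ) < Real.log 2 := Real.log_pos (by norm_num)
    have hC : (0:ℝ) ≤ S * β * Real.log 2 := by positivity
    have hphi_nonneg : ∀ A : ℝ, 0 ≤ phi c (-Real.log 2) A := fun A =>
      Real.rpow_nonneg (uu_pos hc _ A).le _
    dsimp only
    simp only [smul_eq_mul]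
    rw [f_eq hc S β _ _ hp, f_eq hc S β _ _ hq, f_eq hc S β _ _ (by rw [hsnd]; exact hB0),
      hsnd, hfst]
    exact qol _ _ _ _ _ _ a b hC (hphi_nonneg _) hp hq ha hb hab hφ
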